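/- Let n ≥ 1 and K ≥ 0 be integers, let S ∈ ℂ^{n×n}, let ε ≥ 0, let E ∈ ℂ^{n×n} with ‖E‖₂ ≤ ε, and let δ_0,…,δ_K ∈ ℂ. Then the spectral radius of Σ_{k=0}^K δ_k (S+E)^k satisfies ρ( Σ_{k=0}^K δ_k (S+E)^k ) ≤ sup_{0 ≤ x ≤ ρ_ε(S)} Σ_{k=0}^K |δ_k| x^k. -/

import Mathlib

open scoped BigOperators
open Matrix

/-- Operator 2-norm (largest singular value) of a complex matrix. -/
noncomputable def opNorm {m n : ℕ} (A : Matrix (Fin m) (Fin n) ℂ) : ℝ :=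
  ‖LinearMap.toContinuousLinearMap (Matrix.toEuclideanLin A)‖

/-- Euclidean norm of a complex vector. -/
noncomputable def vnorm {n : ℕ} (x : Fin n → ℂ) : ℝ :=
  ‖(WithLp.equiv 2 (Fin n → ℂ)).symm x‖

/-- Spectral radius: maximum modulus of the eigenvalues. -/
noncomputable def specRad {n : ℕ} (A : Matrix (Fin n) (Fin n) ℂ) : ℝ :=
  sSup ((fun z : ℂ => ‖z‖) '' spectrum ℂ A)

/-- ε-pseudospectrum. -/
def pseudoSpec {n : ℕ} (ε : ℝ) (A : Matrix (Fin n) (Fin n) ℂ) : Set ℂ :=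
  {z | ∃ E : Matrix (Fin n) (Fin n) ℂ, opNorm E ≤ ε ∧ z ∈ spectrum ℂ (A + E)}

/-- ε-pseudospectral radius. -/
noncomputable def pseudoSpecRad {n : ℕ} (ε : ℝ) (A : Matrix (Fin n) (Fin n) ℂ) : ℝ :=
  sSup ((fun z : ℂ => ‖z‖) '' pseudoSpec ε A)

/-- The Bernstein change-of-basis matrix M(K,R):
`M_{i,j} = (−1)^{i−j} C(K,j) C(K−j, i−j) / R^i` for `j ≤ i`, and `0` otherwise. -/
noncomputable def Mmat (K : ℕ) (R : ℝ) : Matrix (Fin (K+1)) (Fin (K+1)) ℝ :=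
  fun i j =>
    if (j : ℕ) ≤ (i : ℕ) then
      ((-1 : ℝ) ^ ((i : ℕ) - (j : ℕ)) * (K.choose j) *
        ((K - (j : ℕ)).choose ((i : ℕ) - (j : ℕ)))) / R ^ (i : ℕ)
    else 0

/-- Graph filter `H_h(S) = Σ_{k=0}^K h_k S^k`. -/
noncomputable def filt {n : ℕ} (K : ℕ) (h : ℕ → ℂ) (S : Matrix (Fin n) (Fin n) ℂ) :
    Matrix (Fin n) (Fin n) ℂ :=
  ∑ k ∈ Finset.range (K+1), h k • S ^ k

/-- Vector of absolute values of the first K+1 coefficients. -/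
noncomputable def absVec (K : ℕ) (h : ℕ → ℂ) : Fin (K+1) → ℝ := fun i => ‖h i‖

/-- The constant `M̄ = max_{0≤ℓ≤K} Σ_{k=ℓ}^K |h_k| C(k,ℓ) ‖S‖₂^{k−ℓ}`. -/
noncomputable def Mbar {n : ℕ} (K : ℕ) (h : ℕ → ℂ) (S : Matrix (Fin n) (Fin n) ℂ) : ℝ :=
  ⨆ ℓ : Fin (K+1), ∑ k ∈ Finset.Icc (ℓ : ℕ) K,
    ‖h k‖ * (k.choose ℓ) * opNorm S ^ (k - (ℓ : ℕ))

/-- Complex ReLU: `CReLU(x + iy) = max(x,0) + i max(y,0)`. -/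
noncomputable def CReLU (z : ℂ) : ℂ := ⟨max z.re 0, max z.im 0⟩

/-- Entrywise complex ReLU on vectors. -/
noncomputable def CReLUv {n : ℕ} (x : Fin n → ℂ) : Fin n → ℂ := fun i => CReLU (x i)


open Polynomial in
lemma aux_opNorm_eq {n : ℕ} (A : Matrix (Fin n) (Fin n) ℂ) :
    opNorm A = ‖Matrix.toEuclideanCLM (𝕜 := ℂ) A‖ := by
  congr 1

lemma aux_spec_abs_le {n : ℕ} (hn : 1 ≤ n) (A : Matrix (Fin n) (Fin n) ℂ) {z : ℂ}
    (hz : z ∈ spectrum ℂ A) : ‖z‖ ≤ opNorm A := by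
  haveI : Nonempty (Fin n) := ⟨⟨0, hn⟩⟩
  rw [aux_opNorm_eq]
  have h : z ∈ spectrum ℂ (Matrix.toEuclideanCLM (𝕜 := ℂ) A) := by
    rwa [AlgEquiv.spectrum_eq]
  simpa using spectrum.norm_le_norm_of_mem h

lemma aux_spec_nonempty {n : ℕ} (hn : 1 ≤ n) (A : Matrix (Fin n) (Fin n) ℂ) :
    (spectrum ℂ A).Nonempty := by
  haveI : Nonempty (Fin n) := ⟨⟨0, hn⟩⟩
  haveI : Nontrivial (EuclideanSpace ℂ (Fin n) →L[ℂ] EuclideanSpace ℂ (Fin n)) := by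
    refine ⟨1, 0, fun h => ?_⟩
    obtain ⟨v, hv⟩ := exists_ne (0 : EuclideanSpace ℂ (Fin n))
    exact hv (by simpa using DFunLike.congr_fun h v)
  have := spectrum.nonempty (Matrix.toEuclideanCLM (𝕜 := ℂ) A)
  rwa [AlgEquiv.spectrum_eq] at this

/-- **Statement 11: pseudospectral bound on the spectral radius of a perturbed
matrix polynomial.** -/
theorem stmt_11 {n : ℕ} (hn : 1 ≤ n) (K : ℕ)
    (S : Matrix (Fin n) (Fin n) ℂ) (ε : ℝ) (hε : 0 ≤ ε)
    (E : Matrix (Fin n) (Fin n) ℂ) (hE : opNorm E ≤ ε)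
    (δ : ℕ → ℂ) :
    specRad (∑ k ∈ Finset.range (K+1), δ k • (S + E) ^ k) ≤
      sSup ((fun x : ℝ => ∑ k ∈ Finset.range (K+1), ‖δ k‖ * x ^ k) ''
        Set.Icc 0 (pseudoSpecRad ε S)) := by
  classical
  set P : Polynomial ℂ := ∑ k ∈ Finset.range (K+1), Polynomial.C (δ k) * Polynomial.X ^ k with hP
  have haev : (Polynomial.aeval (S + E)) P = ∑ k ∈ Finset.range (K+1), δ k • (S + E) ^ k := by
    simp only [hP, map_sum, _root_.map_mul, Polynomial.aeval_C, map_pow, Polynomial.aeval_X,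
      Algebra.smul_def]
  have heval : ∀ z : ℂ, P.eval z = ∑ k ∈ Finset.range (K+1), δ k * z ^ k := by
    intro z
    simp [hP, Polynomial.eval_finset_sum]
  -- RHS set is bounded above (continuous image of compact)
  have hbdd : BddAbove ((fun x : ℝ => ∑ k ∈ Finset.range (K+1), ‖δ k‖ * x ^ k) ''
      Set.Icc 0 (pseudoSpecRad ε S)) :=
    (isCompact_Icc.image (by continuity)).bddAbove
  -- pseudospectrum abs set is bounded above
  have hbddP : BddAbove ((fun z : ℂ => ‖z‖) '' pseudoSpec ε S) := by
    refine ⟨opNorm S + ε, ?_⟩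
    rintro a ⟨z, ⟨E', hE', hz⟩, rfl⟩
    calc ‖z‖ ≤ opNorm (S + E') := aux_spec_abs_le hn _ hz
      _ ≤ opNorm S + ε := by
          rw [aux_opNorm_eq, map_add]
          refine (norm_add_le _ _).trans ?_
          rw [← aux_opNorm_eq, ← aux_opNorm_eq]
          linarith
  apply Real.sSup_le
  · rintro a ⟨μ, hμ, rfl⟩
    rw [← haev, spectrum.map_polynomial_aeval_of_nonempty _ _ (aux_spec_nonempty hn _)] at hμ
    obtain ⟨lam, hlam, rfl⟩ := hμ
    have hlam_le : ‖lam‖ ≤ pseudoSpecRad ε S :=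
      le_csSup hbddP ⟨lam, ⟨E, hE, hlam⟩, rfl⟩
    have hmem : ‖lam‖ ∈ Set.Icc 0 (pseudoSpecRad ε S) :=
      ⟨norm_nonneg _, hlam_le⟩
    calc ‖P.eval lam‖
        ≤ ∑ k ∈ Finset.range (K+1), ‖δ k‖ * ‖lam‖ ^ k := by
          rw [heval]
          refine (norm_sum_le _ _).trans ?_
          apply Finset.sum_le_sum
          intro k _
          simp [norm_mul, norm_pow]
      _ ≤ _ := le_csSup hbdd ⟨‖lam‖, hmem, rfl⟩
  · apply Real.sSup_nonneg
    rintro a ⟨x, hx, rfl⟩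
    exact Finset.sum_nonneg fun k _ => mul_nonneg (norm_nonneg _) (pow_nonneg hx.1 k)
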